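/- In the abelian category of functors FinSet* → A (A an abelian category), the full subcategory of polynomial functors of degree ≤ n is closed under subobjects, quotient objects, and extensions. -/

import Mathlib

open CategoryTheory Limits

universe v u

/-- Skeleton of the category `FinSet*` of pointed finite sets: the object `⟨m⟩`
represents `{*} ⊔ Fin m`, and morphisms are pointed maps, encoded as partially
defined maps (`none` = basepoint). -/
structure PtdFin : Type where
  n : ℕ

instance : Category.{0} PtdFin where
  Hom X Y := Fin X.n → Option (Fin Y.n)
  id X := some
  comp f g := fun i => (f i).bind g
  id_comp f := rfl
  comp_id f := by
    funext i; show (f i).bind some = f i; cases f i <;> rfl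
  assoc f g h := by
    funext i
    show ((f i).bind g).bind h = (f i).bind fun j => (g j).bind h
    cases f i <;> rfl

/-- The pointed map `ψ_{I∖{i},I} : {*} ⊔ I → {*} ⊔ (I∖{i})`, the identity away
from `i` and collapsing `i` to the basepoint. -/
def psiDel {m : ℕ} (i : Fin (m + 1)) : (⟨m + 1⟩ : PtdFin) ⟶ ⟨m⟩ :=
  ⇑(finSuccEquiv' i)

/-- `G : FinSet* → A` is polynomial of degree `≤ n`:
`∩_{i ∈ I} ker G(ψ_{I∖{i},I}) = 0` for every finite set `I` with `|I| > n`. -/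
noncomputable def IsPolyDegLE {A : Type u} [Category.{v} A] [Abelian A]
    (n : ℕ) (G : PtdFin ⥤ A) : Prop :=
  ∀ m : ℕ, n < m + 1 →
    (Finset.univ.inf fun i : Fin (m + 1) =>
      kernelSubobject (G.map (psiDel i))) = ⊥

/-! ### Auxiliary material on `PtdFin` -/

/-- The section of `psiDel i`, including `I ∖ {i}` back into `I`. -/
def secDel {m : ℕ} (i : Fin (m + 1)) : (⟨m⟩ : PtdFin) ⟶ ⟨m + 1⟩ :=
  fun j => some ((finSuccEquiv' i).symm (some j))

lemma secDel_psiDel {m : ℕ} (i : Fin (m + 1)) :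
    secDel i ≫ psiDel i = 𝟙 (⟨m⟩ : PtdFin) := by
  funext j
  show (secDel i j).bind (psiDel i) = some j
  show psiDel i ((finSuccEquiv' i).symm (some j)) = some j
  simp [psiDel]

/-- The endomorphism of `{*} ⊔ I` collapsing `i` to the basepoint. -/
def delta {m : ℕ} (i : Fin (m + 1)) : (⟨m + 1⟩ : PtdFin) ⟶ ⟨m + 1⟩ :=
  psiDel i ≫ secDel i

lemma delta_apply {m : ℕ} (i j : Fin (m + 1)) :
    delta i j = if j = i then none else some j := by
  show (psiDel i j).bind (secDel i) = _
  rcases eq_or_ne j i with rfl | h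
  · simp [psiDel, finSuccEquiv'_at]
  · have hj : (finSuccEquiv' i).symm (finSuccEquiv' i j) = j :=
      Equiv.symm_apply_apply _ _
    cases hk : finSuccEquiv' i j with
    | none =>
        exfalso
        apply h
        rw [hk, finSuccEquiv'_symm_none] at hj
        exact hj.symm
    | some k =>
        rw [hk] at hj
        show (finSuccEquiv' i j).bind (secDel i) = _
        rw [hk, if_neg h]
        show some ((finSuccEquiv' i).symm (some k)) = some j
        rw [hj]

lemma delta_comm {m : ℕ} (i j : Fin (m + 1)) :
    delta i ≫ delta j = delta j ≫ delta i := by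
  funext k
  show (delta i k).bind (delta j) = (delta j k).bind (delta i)
  rw [delta_apply, delta_apply]
  rcases eq_or_ne k i with rfl | hi <;> rcases eq_or_ne k j with rfl | hj <;>
    simp_all [delta_apply]

lemma delta_psiDel {m : ℕ} (i : Fin (m + 1)) :
    delta i ≫ psiDel i = psiDel i := by
  unfold delta
  rw [Category.assoc, secDel_psiDel, Category.comp_id]

lemma delta_idem {m : ℕ} (i : Fin (m + 1)) :
    delta i ≫ delta i = delta i := by
  show delta i ≫ psiDel i ≫ secDel i = delta i
  rw [← Category.assoc, delta_psiDel]
  rfl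

/-! ### The idempotent whose vanishing detects polynomiality -/

variable {A : Type u} [Category.{v} A] [Abelian A]

/-- The idempotent `1 - G(δᵢ)`. -/
noncomputable def eh (G : PtdFin ⥤ A) (m : ℕ) (i : Fin (m + 1)) :
    G.obj ⟨m + 1⟩ ⟶ G.obj ⟨m + 1⟩ :=
  𝟙 _ - G.map (delta i)

lemma eh_comm (G : PtdFin ⥤ A) (m : ℕ) (i j : Fin (m + 1)) :
    eh G m i ≫ eh G m j = eh G m j ≫ eh G m i := by
  simp only [eh, Preadditive.sub_comp, Preadditive.comp_sub, Category.id_comp,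
    Category.comp_id, ← G.map_comp, delta_comm i j]
  abel

lemma eh_idem (G : PtdFin ⥤ A) (m : ℕ) (i : Fin (m + 1)) :
    eh G m i ≫ eh G m i = eh G m i := by
  simp only [eh, Preadditive.sub_comp, Preadditive.comp_sub, Category.id_comp,
    Category.comp_id, ← G.map_comp, delta_idem]
  abel

lemma eh_psiDel (G : PtdFin ⥤ A) (m : ℕ) (i : Fin (m + 1)) :
    eh G m i ≫ G.map (psiDel i) = 0 := by
  simp only [eh, Preadditive.sub_comp, Category.id_comp, ← G.map_comp,
    delta_psiDel, sub_self]

/-- Composition of the idempotents `eh G m i` over a list of indices. -/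
noncomputable def comps (G : PtdFin ⥤ A) (m : ℕ) :
    List (Fin (m + 1)) → (G.obj ⟨m + 1⟩ ⟶ G.obj ⟨m + 1⟩)
  | [] => 𝟙 _
  | i :: l => eh G m i ≫ comps G m l

/-- The idempotent `∏ᵢ (1 - G(δᵢ))`, whose vanishing is equivalent to the
intersection-of-kernels condition. -/
noncomputable def DD (G : PtdFin ⥤ A) (m : ℕ) :
    G.obj ⟨m + 1⟩ ⟶ G.obj ⟨m + 1⟩ :=
  comps G m (List.finRange (m + 1))

lemma comps_comm (G : PtdFin ⥤ A) (m : ℕ) (i : Fin (m + 1)) :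
    ∀ l : List (Fin (m + 1)), comps G m l ≫ eh G m i = eh G m i ≫ comps G m l
  | [] => by simp [comps]
  | a :: l => by
      rw [comps, Category.assoc, comps_comm G m i l, ← Category.assoc,
        eh_comm G m a i, Category.assoc]

lemma comps_factor (G : PtdFin ⥤ A) (m : ℕ) (i : Fin (m + 1)) :
    ∀ l : List (Fin (m + 1)), i ∈ l →
      ∃ Q, comps G m l = Q ≫ eh G m i
  | [], h => by simp at h
  | a :: l, h => by
      rcases List.mem_cons.1 h with rfl | h'
      · exact ⟨comps G m l, by rw [comps, ← comps_comm]⟩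
      · obtain ⟨Q, hQ⟩ := comps_factor G m i l h'
        exact ⟨eh G m a ≫ Q, by rw [comps, hQ, Category.assoc]⟩

lemma comps_idem (G : PtdFin ⥤ A) (m : ℕ) :
    ∀ l : List (Fin (m + 1)), comps G m l ≫ comps G m l = comps G m l
  | [] => by simp [comps]
  | a :: l => by
      rw [comps, Category.assoc, ← Category.assoc (comps G m l),
        comps_comm G m a l, ← Category.assoc, ← Category.assoc,
        eh_idem, Category.assoc, comps_idem G m l]

lemma comps_natural {F G : PtdFin ⥤ A} (α : F ⟶ G) (m : ℕ) :
    ∀ l : List (Fin (m + 1)),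
      α.app ⟨m + 1⟩ ≫ comps G m l = comps F m l ≫ α.app ⟨m + 1⟩
  | [] => by simp [comps]
  | a :: l => by
      have hstep : α.app ⟨m + 1⟩ ≫ eh G m a = eh F m a ≫ α.app ⟨m + 1⟩ := by
        simp only [eh, Preadditive.comp_sub, Preadditive.sub_comp,
          Category.comp_id, Category.id_comp]
        rw [α.naturality]
      rw [comps, comps, ← Category.assoc, hstep, Category.assoc,
        comps_natural α m l, ← Category.assoc]

lemma DD_idem (G : PtdFin ⥤ A) (m : ℕ) : DD G m ≫ DD G m = DD G m :=
  comps_idem G m _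

lemma DD_comp_psiDel (G : PtdFin ⥤ A) (m : ℕ) (i : Fin (m + 1)) :
    DD G m ≫ G.map (psiDel i) = 0 := by
  obtain ⟨Q, hQ⟩ := comps_factor G m i (List.finRange (m + 1))
    (List.mem_finRange i)
  rw [DD, hQ, Category.assoc, eh_psiDel, comp_zero]

lemma DD_natural {F G : PtdFin ⥤ A} (α : F ⟶ G) (m : ℕ) :
    α.app ⟨m + 1⟩ ≫ DD G m = DD F m ≫ α.app ⟨m + 1⟩ :=
  comps_natural α m _

/-- The key reformulation: the intersection-of-kernels condition is equivalent
to the vanishing of the idempotent `DD`. -/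
lemma inf_ker_eq_bot_iff (G : PtdFin ⥤ A) (m : ℕ) :
    (Finset.univ.inf fun i : Fin (m + 1) =>
      kernelSubobject (G.map (psiDel i))) = ⊥ ↔ DD G m = 0 := by
  constructor
  · intro h
    have hfac : ∀ i : Fin (m + 1),
        (kernelSubobject (G.map (psiDel i))).Factors (DD G m) := fun i =>
      kernelSubobject_factors _ _ (DD_comp_psiDel G m i)
    have : ((⊥ : Subobject (G.obj ⟨m + 1⟩))).Factors (DD G m) := by
      rw [← h]
      exact (Subobject.finset_inf_factors _).2 fun i _ => hfac i
    exact (Subobject.bot_factors_iff_zero _).1 this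
  · intro h
    set K := Finset.univ.inf fun i : Fin (m + 1) =>
      kernelSubobject (G.map (psiDel i)) with hK
    have harrow : ∀ i : Fin (m + 1), K.arrow ≫ G.map (psiDel i) = 0 := by
      intro i
      have hf := Subobject.finset_inf_arrow_factors Finset.univ
        (fun i : Fin (m + 1) => kernelSubobject (G.map (psiDel i))) i
        (Finset.mem_univ i)
      rw [hK, ← Subobject.factorThru_arrow _ _ hf, Category.assoc,
        kernelSubobject_arrow_comp, comp_zero]
    have habs : ∀ i : Fin (m + 1), K.arrow ≫ eh G m i = K.arrow := by
      intro i
      have hz : K.arrow ≫ G.map (delta i) = 0 := by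
        show K.arrow ≫ G.map (psiDel i ≫ secDel i) = 0
        rw [G.map_comp, ← Category.assoc, harrow, zero_comp]
      simp only [eh, Preadditive.comp_sub, hz, Category.comp_id, sub_zero]
    have key : ∀ l : List (Fin (m + 1)), K.arrow ≫ comps G m l = K.arrow := by
      intro l
      induction l with
      | nil => simp [comps]
      | cons a l ih => rw [comps, ← Category.assoc, habs, ih]
    have hzero : K.arrow = 0 := by
      have := key (List.finRange (m + 1))
      rw [← DD] at this
      rw [← this, h, comp_zero]
    rw [hK] at hzero ⊢
    rw [← Subobject.mk_arrow (Finset.univ.inf fun i : Fin (m + 1) =>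
      kernelSubobject (G.map (psiDel i))), Subobject.mk_eq_bot_iff_zero]
    exact hzero

lemma isPolyDegLE_iff (n : ℕ) (G : PtdFin ⥤ A) :
    IsPolyDegLE n G ↔ ∀ m : ℕ, n < m + 1 → DD G m = 0 := by
  unfold IsPolyDegLE
  exact forall_congr' fun m => imp_congr_right fun _ => inf_ker_eq_bot_iff G m

/-- In the abelian category of functors `FinSet* → A`, the full subcategory of
polynomial functors of degree `≤ n` is closed under subobjects, quotient objects,
and extensions. -/
theorem polynomial_functors_closed_under_sub_quot_ext
    {A : Type u} [Category.{v} A] [Abelian A] (n : ℕ) :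
    (∀ (G H : PtdFin ⥤ A) (f : H ⟶ G), Mono f → IsPolyDegLE n G → IsPolyDegLE n H) ∧
    (∀ (G H : PtdFin ⥤ A) (f : G ⟶ H), Epi f → IsPolyDegLE n G → IsPolyDegLE n H) ∧
    (∀ S : ShortComplex (PtdFin ⥤ A), S.ShortExact →
      IsPolyDegLE n S.X₁ → IsPolyDegLE n S.X₃ → IsPolyDegLE n S.X₂) := by
  refine ⟨?_, ?_, ?_⟩
  · -- subobjects
    intro G H f hf hG
    rw [isPolyDegLE_iff] at hG ⊢
    intro m hm
    have : Mono (f.app (⟨m + 1⟩ : PtdFin)) :=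
      (NatTrans.mono_iff_mono_app f).1 hf _
    refine (cancel_mono (f.app (⟨m + 1⟩ : PtdFin))).1 ?_
    rw [← DD_natural f m, hG m hm, zero_comp, comp_zero]
  · -- quotients
    intro G H f hf hG
    rw [isPolyDegLE_iff] at hG ⊢
    intro m hm
    have : Epi (f.app (⟨m + 1⟩ : PtdFin)) :=
      (NatTrans.epi_iff_epi_app f).1 hf _
    refine (cancel_epi (f.app (⟨m + 1⟩ : PtdFin))).1 ?_
    rw [DD_natural f m, hG m hm, zero_comp, comp_zero]
  · -- extensions
    intro S hS h₁ h₃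
    rw [isPolyDegLE_iff] at h₁ h₃ ⊢
    intro m hm
    have hpl : PreservesFiniteLimits ((evaluation PtdFin A).obj ⟨m + 1⟩) :=
      ⟨fun _ _ _ => inferInstance⟩
    have hpc : PreservesFiniteColimits ((evaluation PtdFin A).obj ⟨m + 1⟩) :=
      ⟨fun _ _ _ => inferInstance⟩
    have hSx : (S.map ((evaluation PtdFin A).obj ⟨m + 1⟩)).ShortExact :=
      hS.map_of_exact _
    have hmono := hSx.mono_f
    have hg : DD S.X₂ m ≫ S.g.app ⟨m + 1⟩ = 0 := by
      rw [← DD_natural S.g m, h₃ m hm, comp_zero]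
    obtain ⟨k, hk⟩ := hSx.exact.lift' (DD S.X₂ m) hg
    change S.X₂.obj ⟨m + 1⟩ ⟶ S.X₁.obj ⟨m + 1⟩ at k
    have hk' : k ≫ S.f.app (⟨m + 1⟩ : PtdFin) = DD S.X₂ m := hk
    have hf0 : S.f.app ⟨m + 1⟩ ≫ DD S.X₂ m = 0 := by
      rw [DD_natural S.f m, h₁ m hm, zero_comp]
    have hDD : DD S.X₂ m ≫ DD S.X₂ m = 0 := by
      rw [show DD S.X₂ m ≫ DD S.X₂ m
          = k ≫ (S.f.app ⟨m + 1⟩ ≫ DD S.X₂ m) from by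
        rw [← Category.assoc, hk'], hf0, comp_zero]
    rw [← DD_idem S.X₂ m]
    exact hDD
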